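/- Let d ≥ 3 be an integer and α ∈ (2−d, 2) with α ≠ 4 − d; set A(r,θ) = √(1 + r² − 2r cos θ). Then for every r ∈ (0,1) ∪ (1,∞), r φ'(r) − φ(r) = (r(2−α) ω_{d−1} / ((d−1) ω_d)) ∫₀^π [ d (sin θ)^d / A^{4−α} − (d−1)(sin θ)^{d−2} / A^{2−α} ] dθ, where φ(r) = (ω_{d−1}/ω_d) ∫₀^π (r − cos θ)(sin θ)^{d−2} A^{α−2} dθ. -/

import Mathlib

open Real MeasureTheory

/-- Surface area of the unit sphere in ℝ^m: ω_m = 2 π^{m/2} / Γ(m/2). -/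
noncomputable def sphereArea (m : ℕ) : ℝ :=
  2 * Real.pi ^ ((m : ℝ) / 2) / Real.Gamma ((m : ℝ) / 2)

lemma u_nonneg (x θ : ℝ) : 0 ≤ 1 + x ^ 2 - 2 * x * Real.cos θ := by
  nlinarith [Real.sin_sq_add_cos_sq θ, sq_nonneg (x - Real.cos θ), sq_nonneg (Real.sin θ)]

lemma u_pos {x : ℝ} (θ : ℝ) (hx : 0 < x) (hx1 : x ≠ 1) : 0 < 1 + x ^ 2 - 2 * x * Real.cos θ := by
  have hxx : x - 1 ≠ 0 := sub_ne_zero.mpr hx1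
  have h1 : (x - 1) ^ 2 > 0 := by positivity
  nlinarith [Real.cos_le_one θ]

lemma sqrt_rpow' {x : ℝ} (hx : 0 ≤ x) (q : ℝ) : Real.sqrt x ^ q = x ^ (q / 2) := by
  rw [Real.sqrt_eq_rpow, ← Real.rpow_mul hx]
  ring_nf

lemma hasDeriv_inner (α s θ x : ℝ) (hu : 0 < 1 + x ^ 2 - 2 * x * Real.cos θ) :
    HasDerivAt (fun y => (y - Real.cos θ) * s * (1 + y ^ 2 - 2 * y * Real.cos θ) ^ ((α - 2) / 2))
      (s * ((1 + x ^ 2 - 2 * x * Real.cos θ) ^ ((α - 2) / 2)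
        + (α - 2) * (x - Real.cos θ) ^ 2
          * (1 + x ^ 2 - 2 * x * Real.cos θ) ^ ((α - 2) / 2 - 1))) x := by
  have h1 : HasDerivAt (fun y : ℝ => 1 + y ^ 2 - 2 * y * Real.cos θ) (2 * x - 2 * Real.cos θ) x := by
    have := ((hasDerivAt_pow 2 x).const_add 1).sub ((hasDerivAt_id x).const_mul (2 * Real.cos θ))
    convert (config := {preTransparency := .default}) this using 1
    · funext y; simp; ring
    · simp
  have h2 := (Real.hasDerivAt_rpow_const (p := (α - 2) / 2) (Or.inl hu.ne')).comp x h1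
  have h3 : HasDerivAt (fun y : ℝ => (y - Real.cos θ) * s) s x := by
    simpa using ((hasDerivAt_id x).sub_const (Real.cos θ)).mul_const s
  have := h3.mul h2
  convert (config := {preTransparency := .default}) this using 1
  simp only [Function.comp]
  ring

lemma cont_rpow_u (r q : ℝ) (hu : ∀ θ, 0 < 1 + r ^ 2 - 2 * r * Real.cos θ) :
    Continuous fun θ => (1 + r ^ 2 - 2 * r * Real.cos θ) ^ q :=
  Continuous.rpow_const (by continuity) (fun θ => Or.inl (hu θ).ne')

lemma ibp (d : ℕ) (hd : 3 ≤ d) (α r : ℝ) (hu : ∀ θ, 0 < 1 + r ^ 2 - 2 * r * Real.cos θ) :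
    ∫ θ in (0:ℝ)..Real.pi,
      (Real.sin θ ^ (d - 2) * Real.cos θ * (1 + r ^ 2 - 2 * r * Real.cos θ) ^ ((α - 2) / 2)
        + (α - 2) * r / ((d : ℝ) - 1) * Real.sin θ ^ d
          * (1 + r ^ 2 - 2 * r * Real.cos θ) ^ ((α - 2) / 2 - 1)) = 0 := by
  have hd3 : (3:ℝ) ≤ (d:ℝ) := by exact_mod_cast hd
  have hd1 : ((d : ℝ) - 1) ≠ 0 := by linarith
  have hcast : ((d - 1 : ℕ) : ℝ) = (d : ℝ) - 1 := by
    push_cast [Nat.cast_sub (by omega : 1 ≤ d)]; ring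
  have hsd : ∀ t : ℝ, Real.sin t ^ d = Real.sin t ^ (d - 1) * Real.sin t := by
    intro t; rw [← pow_succ]; congr 1; omega
  have key : ∀ θ ∈ Set.uIcc (0:ℝ) Real.pi,
      HasDerivAt
        (fun t => Real.sin t ^ (d - 1) * (1 + r ^ 2 - 2 * r * Real.cos t) ^ ((α - 2) / 2)
          / ((d : ℝ) - 1))
        (Real.sin θ ^ (d - 2) * Real.cos θ * (1 + r ^ 2 - 2 * r * Real.cos θ) ^ ((α - 2) / 2)
          + (α - 2) * r / ((d : ℝ) - 1) * Real.sin θ ^ d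
            * (1 + r ^ 2 - 2 * r * Real.cos θ) ^ ((α - 2) / 2 - 1)) θ := by
    intro θ _
    have hpow : HasDerivAt (fun t => Real.sin t ^ (d - 1))
        (((d - 1 : ℕ) : ℝ) * Real.sin θ ^ (d - 1 - 1) * Real.cos θ) θ :=
      (Real.hasDerivAt_sin θ).pow (d - 1)
    have h2 : HasDerivAt (fun t => 1 + r ^ 2 - 2 * r * Real.cos t) (2 * r * Real.sin θ) θ := by
      have := ((Real.hasDerivAt_cos θ).const_mul (2 * r)).const_sub (1 + r ^ 2)
      convert (config := {preTransparency := .default}) this using 1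
      ring
    have h3 := (Real.hasDerivAt_rpow_const (p := (α - 2) / 2) (Or.inl (hu θ).ne')).comp θ h2
    have := (hpow.mul h3).div_const ((d : ℝ) - 1)
    convert (config := {preTransparency := .default}) this using 1
    simp only [Function.comp]
    rw [hcast, hsd θ, show d - 1 - 1 = d - 2 from by omega]
    field_simp
  have hint : IntervalIntegrable
      (fun θ => Real.sin θ ^ (d - 2) * Real.cos θ
          * (1 + r ^ 2 - 2 * r * Real.cos θ) ^ ((α - 2) / 2)
        + (α - 2) * r / ((d : ℝ) - 1) * Real.sin θ ^ d
          * (1 + r ^ 2 - 2 * r * Real.cos θ) ^ ((α - 2) / 2 - 1))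
      MeasureTheory.volume 0 Real.pi := by
    apply Continuous.intervalIntegrable
    apply Continuous.add
    · exact ((Real.continuous_sin.pow _).mul Real.continuous_cos).mul (cont_rpow_u r _ hu)
    · exact (continuous_const.mul (Real.continuous_sin.pow _)).mul (cont_rpow_u r _ hu)
  rw [intervalIntegral.integral_eq_sub_of_hasDerivAt key hint]
  simp [Real.sin_pi, zero_pow (show d - 1 ≠ 0 by omega)]

theorem stmt6 (d : ℕ) (hd : 3 ≤ d) (α : ℝ) (hα1 : 2 - (d : ℝ) < α) (hα2 : α < 2)
    (hα3 : α ≠ 4 - (d : ℝ))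
    (φ : ℝ → ℝ)
    (hφ : ∀ r : ℝ, φ r = sphereArea (d - 1) / sphereArea d *
      ∫ θ in (0:ℝ)..Real.pi,
        (r - Real.cos θ) * (Real.sin θ) ^ (d - 2) *
          (Real.sqrt (1 + r ^ 2 - 2 * r * Real.cos θ)) ^ (α - 2)) :
    ∀ r ∈ Set.Ioo (0:ℝ) 1 ∪ Set.Ioi 1, ∀ D : ℝ, HasDerivAt φ D r →
      r * D - φ r = r * (2 - α) * sphereArea (d - 1) / (((d : ℝ) - 1) * sphereArea d) *
        ∫ θ in (0:ℝ)..Real.pi,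
          ((d : ℝ) * (Real.sin θ) ^ d /
              (Real.sqrt (1 + r ^ 2 - 2 * r * Real.cos θ)) ^ (4 - α)
            - ((d : ℝ) - 1) * (Real.sin θ) ^ (d - 2) /
              (Real.sqrt (1 + r ^ 2 - 2 * r * Real.cos θ)) ^ (2 - α)) := by
  intro r hr D hD
  obtain ⟨hr0, hr1⟩ : 0 < r ∧ r ≠ 1 := by
    rcases hr with h | h
    · exact ⟨h.1, ne_of_lt h.2⟩
    · have h1 : (1:ℝ) < r := h
      exact ⟨by linarith, ne_of_gt h1⟩
  have hd3 : (3:ℝ) ≤ (d:ℝ) := by exact_mod_cast hd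
  have hd1 : ((d : ℝ) - 1) ≠ 0 := by linarith
  set c := sphereArea (d - 1) / sphereArea d with hc
  -- rewrite φ in rpow form
  have hφ' : φ = fun x => c * ∫ θ in (0:ℝ)..Real.pi,
      (x - Real.cos θ) * Real.sin θ ^ (d - 2)
        * (1 + x ^ 2 - 2 * x * Real.cos θ) ^ ((α - 2) / 2) := by
    funext x
    rw [hφ x]
    congr 1
    apply intervalIntegral.integral_congr
    intro θ _
    simp only [sqrt_rpow' (u_nonneg x θ)]
  -- ball setup
  have habs1 : 0 < |r - 1| := abs_pos.mpr (sub_ne_zero.mpr hr1)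
  set δ := min (r / 2) (|r - 1| / 2) with hδdef
  have hδpos : 0 < δ := lt_min (by positivity) (by positivity)
  have hball : ∀ x ∈ Metric.ball r δ, 0 < x ∧ |r - 1| / 2 ≤ |x - 1| ∧ x ≤ r + δ := by
    intro x hx
    rw [Metric.mem_ball, Real.dist_eq] at hx
    have h2 : δ ≤ r / 2 := min_le_left _ _
    have h3 : δ ≤ |r - 1| / 2 := min_le_right _ _
    have hxr := abs_lt.mp hx
    have h4 : |r - 1| - |x - 1| ≤ |r - x| := by
      have := abs_sub_abs_le_abs_sub (r - 1) (x - 1)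
      simpa using this
    have h5 : |r - x| = |x - r| := abs_sub_comm r x
    exact ⟨by linarith, by linarith, by linarith⟩
  have hballu : ∀ x ∈ Metric.ball r δ, ∀ θ,
      (|r - 1| / 2) ^ 2 ≤ 1 + x ^ 2 - 2 * x * Real.cos θ := by
    intro x hx θ
    obtain ⟨hx0, hx1, hxr⟩ := hball x hx
    have h6 : (|r - 1| / 2) ^ 2 ≤ (x - 1) ^ 2 := by
      nlinarith [sq_abs (x - 1), abs_nonneg (x - 1), habs1]
    nlinarith [Real.cos_le_one θ]
  have hm : 0 < (|r - 1| / 2) ^ 2 := by positivity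
  have hupos : ∀ x ∈ Metric.ball r δ, ∀ θ, 0 < 1 + x ^ 2 - 2 * x * Real.cos θ :=
    fun x hx θ => lt_of_lt_of_le hm (hballu x hx θ)
  -- dominated derivative
  have hkey := intervalIntegral.hasDerivAt_integral_of_dominated_loc_of_deriv_le
    (F := fun x θ => (x - Real.cos θ) * Real.sin θ ^ (d - 2)
      * (1 + x ^ 2 - 2 * x * Real.cos θ) ^ ((α - 2) / 2))
    (F' := fun x θ => Real.sin θ ^ (d - 2) *
      ((1 + x ^ 2 - 2 * x * Real.cos θ) ^ ((α - 2) / 2)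
        + (α - 2) * (x - Real.cos θ) ^ 2
          * (1 + x ^ 2 - 2 * x * Real.cos θ) ^ ((α - 2) / 2 - 1)))
    (bound := fun _ => ((|r - 1| / 2) ^ 2) ^ ((α - 2) / 2)
      + |α - 2| * (r + δ + 1) ^ 2 * ((|r - 1| / 2) ^ 2) ^ ((α - 2) / 2 - 1))
    (μ := MeasureTheory.volume) (a := 0) (b := Real.pi) (s := Metric.ball r δ) (x₀ := r)
    (Metric.ball_mem_nhds r hδpos)
    (by
      filter_upwards [Metric.ball_mem_nhds r hδpos] with x hx
      exact (((continuous_const.sub Real.continuous_cos).mul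
        (Real.continuous_sin.pow _)).mul (cont_rpow_u x _ (hupos x hx))).aestronglyMeasurable)
    ((((continuous_const.sub Real.continuous_cos).mul
      (Real.continuous_sin.pow _)).mul
        (cont_rpow_u r _ (hupos r (Metric.mem_ball_self hδpos)))).intervalIntegrable 0 Real.pi)
    (by
      have hur := hupos r (Metric.mem_ball_self hδpos)
      exact ((Real.continuous_sin.pow _).mul ((cont_rpow_u r _ hur).add
        ((continuous_const.mul ((continuous_const.sub Real.continuous_cos).pow 2)).mul
          (cont_rpow_u r _ hur)))).aestronglyMeasurable)
    (by
      refine Filter.Eventually.of_forall fun θ _ x hx => ?_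
      obtain ⟨hx0, hx1ab, hxle⟩ := hball x hx
      have huq := hballu x hx θ
      have hup : 0 < 1 + x ^ 2 - 2 * x * Real.cos θ := hupos x hx θ
      have hpneg : (α - 2) / 2 ≤ 0 := by linarith
      have e1 : (1 + x ^ 2 - 2 * x * Real.cos θ) ^ ((α - 2) / 2)
          ≤ ((|r - 1| / 2) ^ 2) ^ ((α - 2) / 2) :=
        Real.rpow_le_rpow_of_nonpos hm huq hpneg
      have e2 : (1 + x ^ 2 - 2 * x * Real.cos θ) ^ ((α - 2) / 2 - 1)
          ≤ ((|r - 1| / 2) ^ 2) ^ ((α - 2) / 2 - 1) :=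
        Real.rpow_le_rpow_of_nonpos hm huq (by linarith)
      have e3 : (x - Real.cos θ) ^ 2 ≤ (r + δ + 1) ^ 2 := by
        nlinarith [Real.cos_le_one θ, Real.neg_one_le_cos θ]
      have hs : |Real.sin θ ^ (d - 2)| ≤ 1 := by
        rw [abs_pow]
        exact pow_le_one₀ (abs_nonneg _) (abs_le.mpr ⟨Real.neg_one_le_sin θ, Real.sin_le_one θ⟩)
      have hA : |(1 + x ^ 2 - 2 * x * Real.cos θ) ^ ((α - 2) / 2)|
          = (1 + x ^ 2 - 2 * x * Real.cos θ) ^ ((α - 2) / 2) :=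
        abs_of_pos (Real.rpow_pos_of_pos hup _)
      have hB : |(α - 2) * (x - Real.cos θ) ^ 2
            * (1 + x ^ 2 - 2 * x * Real.cos θ) ^ ((α - 2) / 2 - 1)|
          = |α - 2| * (x - Real.cos θ) ^ 2
            * (1 + x ^ 2 - 2 * x * Real.cos θ) ^ ((α - 2) / 2 - 1) := by
        rw [abs_mul, abs_mul, abs_of_nonneg (sq_nonneg (x - Real.cos θ)),
          abs_of_pos (Real.rpow_pos_of_pos hup _)]
      have e4 : |α - 2| * (x - Real.cos θ) ^ 2
            * (1 + x ^ 2 - 2 * x * Real.cos θ) ^ ((α - 2) / 2 - 1)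
          ≤ |α - 2| * (r + δ + 1) ^ 2 * ((|r - 1| / 2) ^ 2) ^ ((α - 2) / 2 - 1) :=
        mul_le_mul (mul_le_mul le_rfl e3 (sq_nonneg _) (abs_nonneg _)) e2
          (le_of_lt (Real.rpow_pos_of_pos hup _)) (by positivity)
      rw [Real.norm_eq_abs, abs_mul]
      calc |Real.sin θ ^ (d - 2)| * |(1 + x ^ 2 - 2 * x * Real.cos θ) ^ ((α - 2) / 2)
            + (α - 2) * (x - Real.cos θ) ^ 2
              * (1 + x ^ 2 - 2 * x * Real.cos θ) ^ ((α - 2) / 2 - 1)|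
          ≤ 1 * (|(1 + x ^ 2 - 2 * x * Real.cos θ) ^ ((α - 2) / 2)|
            + |(α - 2) * (x - Real.cos θ) ^ 2
              * (1 + x ^ 2 - 2 * x * Real.cos θ) ^ ((α - 2) / 2 - 1)|) :=
            mul_le_mul hs (abs_add_le _ _) (abs_nonneg _) zero_le_one
        _ = (1 + x ^ 2 - 2 * x * Real.cos θ) ^ ((α - 2) / 2)
            + |α - 2| * (x - Real.cos θ) ^ 2
              * (1 + x ^ 2 - 2 * x * Real.cos θ) ^ ((α - 2) / 2 - 1) := by
            rw [one_mul, hA, hB]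
        _ ≤ ((|r - 1| / 2) ^ 2) ^ ((α - 2) / 2)
            + |α - 2| * (r + δ + 1) ^ 2 * ((|r - 1| / 2) ^ 2) ^ ((α - 2) / 2 - 1) :=
            add_le_add e1 e4)
    intervalIntegrable_const
    (Filter.Eventually.of_forall fun θ _ x hx =>
      hasDeriv_inner α (Real.sin θ ^ (d - 2)) θ x (hupos x hx θ))
  obtain ⟨hF'int, hder⟩ := hkey
  have hψ : HasDerivAt φ (c * ∫ θ in (0:ℝ)..Real.pi, Real.sin θ ^ (d - 2) *
      ((1 + r ^ 2 - 2 * r * Real.cos θ) ^ ((α - 2) / 2)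
        + (α - 2) * (r - Real.cos θ) ^ 2
          * (1 + r ^ 2 - 2 * r * Real.cos θ) ^ ((α - 2) / 2 - 1))) r := by
    rw [hφ']
    exact hder.const_mul c
  have hDeq : D = c * ∫ θ in (0:ℝ)..Real.pi, Real.sin θ ^ (d - 2) *
      ((1 + r ^ 2 - 2 * r * Real.cos θ) ^ ((α - 2) / 2)
        + (α - 2) * (r - Real.cos θ) ^ 2
          * (1 + r ^ 2 - 2 * r * Real.cos θ) ^ ((α - 2) / 2 - 1)) := hD.unique hψ
  -- algebra part
  have hu_r : ∀ θ, 0 < 1 + r ^ 2 - 2 * r * Real.cos θ := fun θ => u_pos θ hr0 hr1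
  have hφr : φ r = c * ∫ θ in (0:ℝ)..Real.pi,
      (r - Real.cos θ) * Real.sin θ ^ (d - 2)
        * (1 + r ^ 2 - 2 * r * Real.cos θ) ^ ((α - 2) / 2) := by rw [hφ']
  have cint1 : IntervalIntegrable (fun θ => Real.sin θ ^ (d - 2)
      * (1 + r ^ 2 - 2 * r * Real.cos θ) ^ ((α - 2) / 2)) MeasureTheory.volume 0 Real.pi :=
    ((Real.continuous_sin.pow _).mul (cont_rpow_u r _ hu_r)).intervalIntegrable 0 Real.pi
  have cint2 : IntervalIntegrable (fun θ => Real.sin θ ^ d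
      * (1 + r ^ 2 - 2 * r * Real.cos θ) ^ ((α - 2) / 2 - 1)) MeasureTheory.volume 0 Real.pi :=
    ((Real.continuous_sin.pow _).mul (cont_rpow_u r _ hu_r)).intervalIntegrable 0 Real.pi
  have cintB : IntervalIntegrable (fun θ =>
      Real.sin θ ^ (d - 2) * Real.cos θ * (1 + r ^ 2 - 2 * r * Real.cos θ) ^ ((α - 2) / 2)
        + (α - 2) * r / ((d : ℝ) - 1) * Real.sin θ ^ d
          * (1 + r ^ 2 - 2 * r * Real.cos θ) ^ ((α - 2) / 2 - 1))
      MeasureTheory.volume 0 Real.pi := by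
    apply Continuous.intervalIntegrable
    apply Continuous.add
    · exact ((Real.continuous_sin.pow _).mul Real.continuous_cos).mul (cont_rpow_u r _ hu_r)
    · exact (continuous_const.mul (Real.continuous_sin.pow _)).mul (cont_rpow_u r _ hu_r)
  have cintf : IntervalIntegrable (fun θ => (r - Real.cos θ) * Real.sin θ ^ (d - 2)
      * (1 + r ^ 2 - 2 * r * Real.cos θ) ^ ((α - 2) / 2)) MeasureTheory.volume 0 Real.pi :=
    (((continuous_const.sub Real.continuous_cos).mul
      (Real.continuous_sin.pow _)).mul (cont_rpow_u r _ hu_r)).intervalIntegrable 0 Real.pi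
  have hmul : ∀ θ, (1 + r ^ 2 - 2 * r * Real.cos θ) ^ ((α - 2) / 2)
      = (1 + r ^ 2 - 2 * r * Real.cos θ) ^ ((α - 2) / 2 - 1)
        * (1 + r ^ 2 - 2 * r * Real.cos θ) := by
    intro θ
    rw [← Real.rpow_add_one (hu_r θ).ne' ((α - 2) / 2 - 1)]
    norm_num
  have hpt : Set.EqOn
      (fun θ => r * (Real.sin θ ^ (d - 2) *
        ((1 + r ^ 2 - 2 * r * Real.cos θ) ^ ((α - 2) / 2)
          + (α - 2) * (r - Real.cos θ) ^ 2
            * (1 + r ^ 2 - 2 * r * Real.cos θ) ^ ((α - 2) / 2 - 1)))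
        - (r - Real.cos θ) * Real.sin θ ^ (d - 2)
          * (1 + r ^ 2 - 2 * r * Real.cos θ) ^ ((α - 2) / 2))
      (fun θ => (Real.sin θ ^ (d - 2) * Real.cos θ
          * (1 + r ^ 2 - 2 * r * Real.cos θ) ^ ((α - 2) / 2)
        + (α - 2) * r / ((d : ℝ) - 1) * Real.sin θ ^ d
          * (1 + r ^ 2 - 2 * r * Real.cos θ) ^ ((α - 2) / 2 - 1))
        + ((α - 2) * r) * (Real.sin θ ^ (d - 2)
            * (1 + r ^ 2 - 2 * r * Real.cos θ) ^ ((α - 2) / 2))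
        - ((α - 2) * r + (α - 2) * r / ((d : ℝ) - 1)) * (Real.sin θ ^ d
            * (1 + r ^ 2 - 2 * r * Real.cos θ) ^ ((α - 2) / 2 - 1)))
      (Set.uIcc 0 Real.pi) := by
    intro θ _
    simp only
    have h2 : Real.sin θ ^ d = Real.sin θ ^ (d - 2) * Real.sin θ ^ 2 := by
      rw [← pow_add]; congr 1; omega
    rw [h2, Real.sin_sq, hmul θ]
    field_simp
    ring
  have hBint := ibp d hd α r hu_r
  have e5 : (∫ θ in (0:ℝ)..Real.pi,
        (r * (Real.sin θ ^ (d - 2) *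
          ((1 + r ^ 2 - 2 * r * Real.cos θ) ^ ((α - 2) / 2)
            + (α - 2) * (r - Real.cos θ) ^ 2
              * (1 + r ^ 2 - 2 * r * Real.cos θ) ^ ((α - 2) / 2 - 1)))
          - (r - Real.cos θ) * Real.sin θ ^ (d - 2)
            * (1 + r ^ 2 - 2 * r * Real.cos θ) ^ ((α - 2) / 2)))
      = ((α - 2) * r) * (∫ θ in (0:ℝ)..Real.pi, Real.sin θ ^ (d - 2)
            * (1 + r ^ 2 - 2 * r * Real.cos θ) ^ ((α - 2) / 2))
        - ((α - 2) * r + (α - 2) * r / ((d : ℝ) - 1)) * (∫ θ in (0:ℝ)..Real.pi, Real.sin θ ^ d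
            * (1 + r ^ 2 - 2 * r * Real.cos θ) ^ ((α - 2) / 2 - 1)) := by
    rw [intervalIntegral.integral_congr hpt,
      intervalIntegral.integral_sub (cintB.add (cint1.const_mul _)) (cint2.const_mul _),
      intervalIntegral.integral_add cintB (cint1.const_mul _), hBint,
      intervalIntegral.integral_const_mul, intervalIntegral.integral_const_mul, zero_add]
  have e6 : (∫ θ in (0:ℝ)..Real.pi,
        (r * (Real.sin θ ^ (d - 2) *
          ((1 + r ^ 2 - 2 * r * Real.cos θ) ^ ((α - 2) / 2)
            + (α - 2) * (r - Real.cos θ) ^ 2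
              * (1 + r ^ 2 - 2 * r * Real.cos θ) ^ ((α - 2) / 2 - 1)))
          - (r - Real.cos θ) * Real.sin θ ^ (d - 2)
            * (1 + r ^ 2 - 2 * r * Real.cos θ) ^ ((α - 2) / 2)))
      = r * (∫ θ in (0:ℝ)..Real.pi, Real.sin θ ^ (d - 2) *
          ((1 + r ^ 2 - 2 * r * Real.cos θ) ^ ((α - 2) / 2)
            + (α - 2) * (r - Real.cos θ) ^ 2
              * (1 + r ^ 2 - 2 * r * Real.cos θ) ^ ((α - 2) / 2 - 1)))
        - ∫ θ in (0:ℝ)..Real.pi, (r - Real.cos θ) * Real.sin θ ^ (d - 2)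
            * (1 + r ^ 2 - 2 * r * Real.cos θ) ^ ((α - 2) / 2) := by
    rw [intervalIntegral.integral_sub (hF'int.const_mul r) cintf,
      intervalIntegral.integral_const_mul]
  have e7 := e6.symm.trans e5
  have hRHSpt : Set.EqOn
      (fun θ => (d : ℝ) * Real.sin θ ^ d
          / Real.sqrt (1 + r ^ 2 - 2 * r * Real.cos θ) ^ (4 - α)
        - ((d : ℝ) - 1) * Real.sin θ ^ (d - 2)
          / Real.sqrt (1 + r ^ 2 - 2 * r * Real.cos θ) ^ (2 - α))
      (fun θ => (d : ℝ) * (Real.sin θ ^ d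
          * (1 + r ^ 2 - 2 * r * Real.cos θ) ^ ((α - 2) / 2 - 1))
        - ((d : ℝ) - 1) * (Real.sin θ ^ (d - 2)
          * (1 + r ^ 2 - 2 * r * Real.cos θ) ^ ((α - 2) / 2)))
      (Set.uIcc 0 Real.pi) := by
    intro θ _
    simp only
    rw [sqrt_rpow' (u_nonneg r θ) (4 - α), sqrt_rpow' (u_nonneg r θ) (2 - α),
      show (4 - α) / 2 = -((α - 2) / 2 - 1) from by ring,
      show (2 - α) / 2 = -((α - 2) / 2) from by ring,
      Real.rpow_neg (u_nonneg r θ) ((α - 2) / 2 - 1),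
      Real.rpow_neg (u_nonneg r θ) ((α - 2) / 2),
      div_inv_eq_mul, div_inv_eq_mul]
    ring
  have hRHS : (∫ θ in (0:ℝ)..Real.pi,
        ((d : ℝ) * Real.sin θ ^ d
            / Real.sqrt (1 + r ^ 2 - 2 * r * Real.cos θ) ^ (4 - α)
          - ((d : ℝ) - 1) * Real.sin θ ^ (d - 2)
            / Real.sqrt (1 + r ^ 2 - 2 * r * Real.cos θ) ^ (2 - α)))
      = (d : ℝ) * (∫ θ in (0:ℝ)..Real.pi, Real.sin θ ^ d
            * (1 + r ^ 2 - 2 * r * Real.cos θ) ^ ((α - 2) / 2 - 1))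
        - ((d : ℝ) - 1) * (∫ θ in (0:ℝ)..Real.pi, Real.sin θ ^ (d - 2)
            * (1 + r ^ 2 - 2 * r * Real.cos θ) ^ ((α - 2) / 2)) := by
    rw [intervalIntegral.integral_congr hRHSpt,
      intervalIntegral.integral_sub (cint2.const_mul _) (cint1.const_mul _),
      intervalIntegral.integral_const_mul, intervalIntegral.integral_const_mul]
  have hω : (0:ℝ) < sphereArea d := by
    have hdpos : (0:ℝ) < (d : ℝ) / 2 := by linarith
    have hΓ : 0 < Real.Gamma ((d : ℝ) / 2) := Real.Gamma_pos_of_pos hdpos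
    exact div_pos (by positivity) hΓ
  rw [hDeq, hφr, hRHS]
  linear_combination c * e7 + (by rw [hc]; field_simp; ring :
    c * (((α - 2) * r) * (∫ θ in (0:ℝ)..Real.pi, Real.sin θ ^ (d - 2)
            * (1 + r ^ 2 - 2 * r * Real.cos θ) ^ ((α - 2) / 2))
        - ((α - 2) * r + (α - 2) * r / ((d : ℝ) - 1)) * (∫ θ in (0:ℝ)..Real.pi, Real.sin θ ^ d
            * (1 + r ^ 2 - 2 * r * Real.cos θ) ^ ((α - 2) / 2 - 1)))
      = r * (2 - α) * sphereArea (d - 1) / (((d : ℝ) - 1) * sphereArea d)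
        * ((d : ℝ) * (∫ θ in (0:ℝ)..Real.pi, Real.sin θ ^ d
            * (1 + r ^ 2 - 2 * r * Real.cos θ) ^ ((α - 2) / 2 - 1))
          - ((d : ℝ) - 1) * (∫ θ in (0:ℝ)..Real.pi, Real.sin θ ^ (d - 2)
            * (1 + r ^ 2 - 2 * r * Real.cos θ) ^ ((α - 2) / 2))))
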